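/- Let F be a spanning tree of G of minimum c-length among all spanning trees. Then τ(G, T_F △ T, c) ≤ (2/3)·opt(G,T,c), i.e. the minimum c-length of a (T_F △ T)-join is at most two thirds of the minimum length of a T-tour. -/

import Mathlib

open scoped Classical
open Finset

noncomputable section

variable {V : Type*} [Fintype V] [DecidableEq V]

/-- The edge set of a graph as a `Finset` of `Sym2 V`. -/
def edgesOf (G : SimpleGraph V) : Finset (Sym2 V) :=
  Finset.univ.filter (fun e => e ∈ G.edgeSet)

/-- Degree of a vertex in a set of edges. -/
def degOn (J : Finset (Sym2 V)) (v : V) : ℕ :=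
  (J.filter (fun e => v ∈ e)).card

/-- The set of vertices of odd degree in a set of edges. -/
def oddVerts (J : Finset (Sym2 V)) : Finset V :=
  Finset.univ.filter (fun v => Odd (degOn J v))

/-- `J` is a `T`-join of `G`: a set of edges of `G` whose odd-degree vertex set is `T`. -/
def IsTJoin (G : SimpleGraph V) (T : Finset V) (J : Finset (Sym2 V)) : Prop :=
  J ⊆ edgesOf G ∧ oddVerts J = T

/-- `F` is a spanning tree of `G`: edges of `G`, connected, with `|V| - 1` edges. -/
def IsSpanningTree (G : SimpleGraph V) (F : Finset (Sym2 V)) : Prop :=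
  F ⊆ edgesOf G ∧ (SimpleGraph.fromEdgeSet (F : Set (Sym2 V))).Connected ∧
    F.card + 1 = Fintype.card V

/-- δ(W): the set of edges of `G` with exactly one endpoint in `W`. -/
def cutEdges (G : SimpleGraph V) (W : Finset V) : Finset (Sym2 V) :=
  (edgesOf G).filter (fun e => ∃ u v, e = s(u, v) ∧ u ∈ W ∧ v ∉ W)

/-- `𝒲` is a partition of the vertex set `V`. -/
def IsPartitionOf (𝒲 : Finset (Finset V)) : Prop :=
  (∀ W ∈ 𝒲, W.Nonempty) ∧
  (∀ W₁ ∈ 𝒲, ∀ W₂ ∈ 𝒲, W₁ ≠ W₂ → Disjoint W₁ W₂) ∧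
  (∀ v : V, ∃ W ∈ 𝒲, v ∈ W)

/-- δ(𝒲): the set of edges of `G` whose endpoints lie in different classes of `𝒲`. -/
def partitionCut (G : SimpleGraph V) (𝒲 : Finset (Finset V)) : Finset (Sym2 V) :=
  (edgesOf G).filter (fun e => ¬ ∃ W ∈ 𝒲, ∀ v ∈ e, v ∈ W)

/-- `x(A) = Σ_{e ∈ A} x(e)`. -/
def xval (x : Sym2 V → ℝ) (A : Finset (Sym2 V)) : ℝ := ∑ e ∈ A, x e

/-- `cᵀx`, summed over the edges of `G`. -/
def dotE (G : SimpleGraph V) (c x : Sym2 V → ℝ) : ℝ := ∑ e ∈ edgesOf G, c e * x e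

/-- Membership in the polyhedron `P(G,T)`. -/
def memP (G : SimpleGraph V) (T : Finset V) (x : Sym2 V → ℝ) : Prop :=
  (∀ W : Finset V, W.Nonempty → W ≠ Finset.univ → Even ((W ∩ T).card) →
      2 ≤ xval x (cutEdges G W)) ∧
  (∀ 𝒲 : Finset (Finset V), IsPartitionOf 𝒲 →
      (𝒲.card : ℝ) - 1 ≤ xval x (partitionCut G 𝒲)) ∧
  (∀ e ∈ edgesOf G, 0 ≤ x e ∧ x e ≤ 2)

/-- `m` (an edge multiplicity vector, values in `{0,1,2}`) is a `T`-tour of `G`: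
its support consists of edges of `G`, the support spans a connected graph on `V`,
and the vertices of odd degree (with multiplicities) are exactly `T`. -/
def IsTTour (G : SimpleGraph V) (T : Finset V) (m : Sym2 V → ℕ) : Prop :=
  (∀ e, 0 < m e → e ∈ G.edgeSet) ∧ (∀ e, m e ≤ 2) ∧
  (SimpleGraph.fromEdgeSet {e | 0 < m e}).Connected ∧
  (∀ v : V, (Odd (∑ e ∈ edgesOf G, if v ∈ e then m e else 0) ↔ v ∈ T))

/-- The `c`-length of a multiset of edges given by multiplicities `m`. -/
def tourCost (G : SimpleGraph V) (c : Sym2 V → ℝ) (m : Sym2 V → ℕ) : ℝ :=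
  ∑ e ∈ edgesOf G, (m e : ℝ) * c e

/-- `opt(G,T,c)`: the minimum `c`-length of a `T`-tour. -/
def optLen (G : SimpleGraph V) (T : Finset V) (c : Sym2 V → ℝ) : ℝ :=
  sInf {L : ℝ | ∃ m, IsTTour G T m ∧ L = tourCost G c m}

/-- The `c`-length of a set of edges. -/
def setCost (c : Sym2 V → ℝ) (J : Finset (Sym2 V)) : ℝ := ∑ e ∈ J, c e

/-- `τ(G,T',c)`: the minimum `c`-length of a `T'`-join. -/
def tau (G : SimpleGraph V) (T' : Finset V) (c : Sym2 V → ℝ) : ℝ :=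
  sInf {L : ℝ | ∃ J, IsTJoin G T' J ∧ L = setCost c J}

/-- Membership in `Q₊(G,T')`: nonnegative and at least `1` on every `T'`-cut. -/
def memQplus (G : SimpleGraph V) (T' : Finset V) (x : Sym2 V → ℝ) : Prop :=
  (∀ e ∈ edgesOf G, 0 ≤ x e) ∧
  (∀ W : Finset V, W.Nonempty → W ≠ Finset.univ → Odd ((W ∩ T').card) →
      1 ≤ xval x (cutEdges G W))

/-- Symmetric difference of two finite sets. -/
def symDiff (A B : Finset V) : Finset V := (A \ B) ∪ (B \ A)

/-- `p*(e) = Σ_{F ∈ 𝓕, e ∈ F(T)} λ_F`, where `JT F` plays the role of `F(T)`. -/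
def pstar (𝓕 : Finset (Finset (Sym2 V))) (lam : Finset (Sym2 V) → ℝ)
    (JT : Finset (Sym2 V) → Finset (Sym2 V)) (e : Sym2 V) : ℝ :=
  ∑ F ∈ 𝓕.filter (fun F => e ∈ JT F), lam F

/-- `q*(e) = Σ_{F ∈ 𝓕, e ∈ F ∖ F(T)} λ_F`. -/
def qstar (𝓕 : Finset (Finset (Sym2 V))) (lam : Finset (Sym2 V) → ℝ)
    (JT : Finset (Sym2 V) → Finset (Sym2 V)) (e : Sym2 V) : ℝ :=
  ∑ F ∈ 𝓕.filter (fun F => e ∈ F \ JT F), lam F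

/-- `𝒬`: the family of cuts `Q` of `G` (as edge sets) with `x*(Q) < 2`. -/
def Qset (G : SimpleGraph V) (xstar : Sym2 V → ℝ) : Finset (Finset (Sym2 V)) :=
  Finset.univ.filter (fun C : Finset (Sym2 V) =>
    (∃ W : Finset V, W.Nonempty ∧ W ≠ Finset.univ ∧ C = cutEdges G W) ∧ xval xstar C < 2)

/-- `x^Q(e) = Σ_{F ∈ 𝓕, Q ∩ F = {e}} λ_F`. -/
def xQ (𝓕 : Finset (Finset (Sym2 V))) (lam : Finset (Sym2 V) → ℝ)
    (C : Finset (Sym2 V)) (e : Sym2 V) : ℝ :=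
  ∑ F ∈ 𝓕.filter (fun F => C ∩ F = {e}), lam F

/-- `f^Q(β) = max {0, (4β - 1 - β x*(Q)) / (2 - x*(Q))}`. -/
def fQ (xstar : Sym2 V → ℝ) (β : ℝ) (C : Finset (Sym2 V)) : ℝ :=
  max 0 ((4 * β - 1 - β * xval xstar C) / (2 - xval xstar C))

/-- `s^F(β) = Σ_{Q ∈ 𝒬, |Q ∩ F| ≥ 2} f^Q(β) x^Q`. -/
def sF (G : SimpleGraph V) (xstar : Sym2 V → ℝ) (𝓕 : Finset (Finset (Sym2 V)))
    (lam : Finset (Sym2 V) → ℝ) (β : ℝ) (F : Finset (Sym2 V)) (e : Sym2 V) : ℝ :=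
  ∑ C ∈ (Qset G xstar).filter (fun C => 2 ≤ (C ∩ F).card), fQ xstar β C * xQ 𝓕 lam C e

end
section Aux
set_option linter.unusedSectionVars false
open scoped Classical
open Finset

variable {V : Type*} [Fintype V] [DecidableEq V]

lemma mem_symDiff {A B : Finset V} {v : V} :
    v ∈ symDiff A B ↔ ((v ∈ A) ↔ ¬ (v ∈ B)) := by
  simp only [symDiff, Finset.mem_union, Finset.mem_sdiff]
  tauto

lemma mem_oddVerts {J : Finset (Sym2 V)} {v : V} :
    v ∈ oddVerts J ↔ Odd (degOn J v) := by
  simp [oddVerts]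

lemma degOn_union_of_disjoint {A B : Finset (Sym2 V)} (h : Disjoint A B) (v : V) :
    degOn (A ∪ B) v = degOn A v + degOn B v := by
  unfold degOn
  rw [Finset.filter_union]
  exact Finset.card_union_of_disjoint (Finset.disjoint_filter_filter h)

lemma degOn_sdiff_inter (A B : Finset (Sym2 V)) (v : V) :
    degOn (A \ B) v + degOn (A ∩ B) v = degOn A v := by
  rw [← degOn_union_of_disjoint (Finset.disjoint_sdiff_inter A B)]
  rw [Finset.sdiff_union_inter]

lemma odd_degOn_symDiff {A B : Finset (Sym2 V)} {v : V} :
    Odd (degOn (symDiff A B) v) ↔ (Odd (degOn A v) ↔ ¬ Odd (degOn B v)) := by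
  have h1 := degOn_sdiff_inter A B v
  have h2 := degOn_sdiff_inter B A v
  have h3 : degOn (symDiff A B) v = degOn (A \ B) v + degOn (B \ A) v := by
    unfold symDiff
    exact degOn_union_of_disjoint (disjoint_sdiff_sdiff) v
  rw [Finset.inter_comm B A] at h2
  rw [Nat.odd_iff, Nat.odd_iff, Nat.odd_iff]
  omega

lemma oddVerts_symDiff (A B : Finset (Sym2 V)) :
    oddVerts (symDiff A B) = symDiff (oddVerts A) (oddVerts B) := by
  ext v
  rw [mem_symDiff, mem_oddVerts, mem_oddVerts, mem_oddVerts, odd_degOn_symDiff]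

lemma oddVerts_empty : oddVerts (∅ : Finset (Sym2 V)) = ∅ := by
  ext v; simp [mem_oddVerts, degOn]

lemma degOn_singleton (e : Sym2 V) (v : V) :
    degOn ({e} : Finset (Sym2 V)) v = if v ∈ e then 1 else 0 := by
  unfold degOn
  rw [Finset.filter_singleton]
  split <;> simp

lemma oddVerts_single {u w : V} (h : u ≠ w) :
    oddVerts ({s(u, w)} : Finset (Sym2 V)) = {u, w} := by
  ext v
  rw [mem_oddVerts, degOn_singleton]
  by_cases hv : v ∈ s(u, w)
  · simp only [hv, if_true]
    rw [Sym2.mem_iff] at hv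
    rcases hv with rfl | rfl <;> simp
  · simp only [hv, if_false]
    rw [Sym2.mem_iff] at hv
    push_neg at hv
    simp [Finset.mem_insert, hv.1, hv.2]

end Aux
section Aux2
set_option linter.unusedSectionVars false
open scoped Classical
open Finset

variable {V : Type*} [Fintype V] [DecidableEq V]

lemma card_symDiff_even_iff (A B : Finset V) :
    Even (symDiff A B).card ↔ (Even A.card ↔ Even B.card) := by
  have h1 : (A \ B).card + (A ∩ B).card = A.card := by
    rw [← Finset.card_union_of_disjoint (disjoint_sdiff_inter A B), Finset.sdiff_union_inter]
  have h2 : (B \ A).card + (B ∩ A).card = B.card := by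
    rw [← Finset.card_union_of_disjoint (disjoint_sdiff_inter B A), Finset.sdiff_union_inter]
  have h3 : (symDiff A B).card = (A \ B).card + (B \ A).card :=
    Finset.card_union_of_disjoint disjoint_sdiff_sdiff
  rw [Finset.inter_comm B A] at h2
  rw [Nat.even_iff, Nat.even_iff, Nat.even_iff]
  omega

lemma even_card_symDiff {A B : Finset V} (hA : Even A.card) (hB : Even B.card) :
    Even (symDiff A B).card := by
  rw [card_symDiff_even_iff]; tauto

lemma even_card_oddVerts {J : Finset (Sym2 V)} (hJ : ∀ e ∈ J, ¬ e.IsDiag) :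
    Even (oddVerts J).card := by
  induction J using Finset.induction_on with
  | empty => simp [oddVerts_empty]
  | @insert e J he ih =>
      have hins : insert e J = symDiff ({e} : Finset (Sym2 V)) J := by
        unfold symDiff
        ext x
        simp only [Finset.mem_insert, Finset.mem_union, Finset.mem_sdiff,
          Finset.mem_singleton]
        by_cases hx : x = e
        · subst hx; simp [he]
        · simp [hx]
      rw [hins, oddVerts_symDiff, card_symDiff_even_iff]
      have hJ' : ∀ e' ∈ J, ¬ e'.IsDiag := fun e' h' => hJ e' (Finset.mem_insert_of_mem h')
      have hdiag : ¬ e.IsDiag := hJ e (Finset.mem_insert_self e J)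
      induction e using Sym2.inductionOn with
      | _ u w =>
        rw [Sym2.mk_isDiag_iff] at hdiag
        rw [oddVerts_single hdiag]
        have : ({u, w} : Finset V).card = 2 := Finset.card_pair hdiag
        rw [this]
        simp [ih hJ']

lemma exists_pair_join (R : Finset (Sym2 V)) {u v : V}
    (w : (SimpleGraph.fromEdgeSet (R : Set (Sym2 V))).Walk u v) :
    ∃ Y : Finset (Sym2 V), Y ⊆ R ∧ oddVerts Y = if u = v then ∅ else {u, v} := by
  induction w with
  | nil => exact ⟨∅, Finset.empty_subset _, by simp [oddVerts_empty]⟩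
  | @cons a b c hab p ih =>
      obtain ⟨Y, hYR, hY⟩ := ih
      rw [SimpleGraph.fromEdgeSet_adj] at hab
      obtain ⟨heR, hne⟩ := hab
      refine ⟨symDiff ({s(a, b)} : Finset (Sym2 V)) Y, ?_, ?_⟩
      · intro x hx
        rcases Finset.mem_union.1 hx with h | h
        · have := (Finset.mem_sdiff.1 h).1
          rw [Finset.mem_singleton] at this
          subst this
          exact_mod_cast heR
        · exact hYR (Finset.mem_sdiff.1 h).1
      · rw [oddVerts_symDiff, oddVerts_single hne, hY]
        ext x
        rw [mem_symDiff]
        by_cases hbc : b = c <;> by_cases hac : a = c <;>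
          by_cases hxa : x = a <;> by_cases hxb : x = b <;> by_cases hxc : x = c <;>
          simp_all

lemma exists_join_of_connected (R : Finset (Sym2 V))
    (hconn : (SimpleGraph.fromEdgeSet (R : Set (Sym2 V))).Connected)
    (N : Finset V) (hN : Even N.card) :
    ∃ Y : Finset (Sym2 V), Y ⊆ R ∧ oddVerts Y = N := by
  obtain ⟨n, hn⟩ : ∃ n, N.card = n := ⟨N.card, rfl⟩
  induction n using Nat.strong_induction_on generalizing N with
  | _ n ih =>
    rcases Finset.eq_empty_or_nonempty N with rfl | ⟨u, hu⟩
    · exact ⟨∅, Finset.empty_subset _, by simp [oddVerts_empty]⟩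
    · have hcard2 : 2 ≤ N.card := by
        rcases hN with ⟨k, hk⟩
        have : N.card ≠ 0 := Finset.card_ne_zero_of_mem hu
        omega
      have hNe : (N.erase u).Nonempty := by
        rw [← Finset.card_pos, Finset.card_erase_of_mem hu]
        omega
      obtain ⟨v, hv⟩ := hNe
      have huv : u ≠ v := (Finset.ne_of_mem_erase hv).symm
      have hvN : v ∈ N := Finset.mem_of_mem_erase hv
      have hsub : ({u, v} : Finset V) ⊆ N := by
        intro x hx
        rcases Finset.mem_insert.1 hx with rfl | hx
        · exact hu
        · rw [Finset.mem_singleton] at hx; subst hx; exact hvN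
      set N' := N \ {u, v} with hN'def
      have hcardN' : N'.card = N.card - 2 := by
        rw [hN'def, Finset.card_sdiff_of_subset hsub, Finset.card_pair huv]
      have hevenN' : Even N'.card := by
        rcases hN with ⟨k, hk⟩
        rw [hcardN']
        exact ⟨k - 1, by omega⟩
      obtain ⟨Y2, hY2R, hY2⟩ := ih (n - 2) (by omega) N' hevenN' (by omega)
      obtain ⟨w⟩ := hconn.preconnected u v
      obtain ⟨Y1, hY1R, hY1⟩ := exists_pair_join R w
      rw [if_neg huv] at hY1
      refine ⟨symDiff Y1 Y2, ?_, ?_⟩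
      · intro x hx
        rcases Finset.mem_union.1 hx with h | h
        · exact hY1R (Finset.mem_sdiff.1 h).1
        · exact hY2R (Finset.mem_sdiff.1 h).1
      · rw [oddVerts_symDiff, hY1, hY2]
        ext x
        rw [mem_symDiff]
        simp only [hN'def, Finset.mem_sdiff, Finset.mem_insert, Finset.mem_singleton]
        by_cases hxu : x = u
        · subst hxu; simp [hu]
        · by_cases hxv : x = v
          · subst hxv; simp [hvN, hxu]
          · by_cases hxN : x ∈ N <;> simp_all
end Aux2
section Aux3
set_option linter.unusedSectionVars false
open scoped Classical
open Finset

variable {V : Type*} [Fintype V] [DecidableEq V]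

lemma mem_edgesOf {G : SimpleGraph V} {e : Sym2 V} : e ∈ edgesOf G ↔ e ∈ G.edgeSet := by
  simp [edgesOf]

lemma sdiff_fromEdgeSet_erase (S : Finset (Sym2 V)) (e : Sym2 V) (hd : ¬ e.IsDiag) :
    SimpleGraph.fromEdgeSet (S : Set (Sym2 V)) \ SimpleGraph.fromEdgeSet {e}
      = SimpleGraph.fromEdgeSet ((S.erase e : Finset (Sym2 V)) : Set (Sym2 V)) := by
  ext a b
  rw [SimpleGraph.sdiff_adj, SimpleGraph.fromEdgeSet_adj, SimpleGraph.fromEdgeSet_adj,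
    SimpleGraph.fromEdgeSet_adj]
  simp only [Finset.coe_erase, Set.mem_diff, Set.mem_singleton_iff, Finset.mem_coe]
  constructor
  · rintro ⟨⟨h1, h2⟩, h3⟩
    refine ⟨⟨h1, fun hc => h3 ⟨hc, h2⟩⟩, h2⟩
  · rintro ⟨⟨h1, h2⟩, h3⟩
    exact ⟨⟨h1, h3⟩, fun hc => h2 hc.1⟩

lemma reachable_delete_of_walk {H : SimpleGraph V} {u v : V}
    (hre : (H \ SimpleGraph.fromEdgeSet {s(u, v)}).Reachable u v) {a b : V}
    (w : H.Walk a b) : (H \ SimpleGraph.fromEdgeSet {s(u, v)}).Reachable a b := by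
  induction w with
  | nil => exact SimpleGraph.Reachable.refl _
  | @cons a x b hadj p ih =>
      refine SimpleGraph.Reachable.trans ?_ ih
      by_cases he : s(a, x) = s(u, v)
      · rw [Sym2.eq_iff] at he
        rcases he with ⟨rfl, rfl⟩ | ⟨rfl, rfl⟩
        · exact hre
        · exact hre.symm
      · apply SimpleGraph.Adj.reachable
        rw [SimpleGraph.sdiff_adj]
        refine ⟨hadj, ?_⟩
        rw [SimpleGraph.fromEdgeSet_adj]
        rintro ⟨h1, -⟩
        exact he h1

lemma exists_spanning_tree_subset (G : SimpleGraph V) (S : Finset (Sym2 V))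
    (hS : S ⊆ edgesOf G)
    (hconn : (SimpleGraph.fromEdgeSet (S : Set (Sym2 V))).Connected) :
    ∃ F'' : Finset (Sym2 V), F'' ⊆ S ∧ IsSpanningTree G F'' := by
  obtain ⟨n, hn⟩ : ∃ n, S.card = n := ⟨_, rfl⟩
  induction n using Nat.strong_induction_on generalizing S with
  | _ n ih =>
    by_cases hdel : ∃ e ∈ S,
        (SimpleGraph.fromEdgeSet ((S.erase e : Finset (Sym2 V)) : Set (Sym2 V))).Connected
    · obtain ⟨e, heS, hc⟩ := hdel
      have hcard : (S.erase e).card = n - 1 := by rw [Finset.card_erase_of_mem heS, hn]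
      have hlt : n - 1 < n := by
        have : S.card ≠ 0 := Finset.card_ne_zero_of_mem heS
        omega
      obtain ⟨F'', h1, h2⟩ := ih (n - 1) hlt (S.erase e)
        ((Finset.erase_subset e S).trans hS) hc hcard
      exact ⟨F'', h1.trans (Finset.erase_subset e S), h2⟩
    · push_neg at hdel
      have hnodiag : ∀ e ∈ S, ¬ e.IsDiag := fun e he =>
        SimpleGraph.not_isDiag_of_mem_edgeSet G (mem_edgesOf.1 (hS he))
      have hacyc : (SimpleGraph.fromEdgeSet (S : Set (Sym2 V))).IsAcyclic := by
        rw [SimpleGraph.isAcyclic_iff_forall_edge_isBridge]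
        intro e he
        by_contra hnb
        rw [SimpleGraph.edgeSet_fromEdgeSet] at he
        obtain ⟨heS, hd⟩ := he
        induction e using Sym2.inductionOn with
        | _ x y =>
          rw [SimpleGraph.isBridge_iff] at hnb
          push_neg at hnb
          have hxy : x ≠ y := fun hc => hd (by simp [hc, Sym2.mk_isDiag_iff])
          have hadj : (SimpleGraph.fromEdgeSet (S : Set (Sym2 V))).Adj x y := by
            rw [SimpleGraph.fromEdgeSet_adj]; exact ⟨heS, hxy⟩
          have hre := hnb
          have hcon' : (SimpleGraph.fromEdgeSet
              ((S.erase s(x, y) : Finset (Sym2 V)) : Set (Sym2 V))).Connected := by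
            rw [← sdiff_fromEdgeSet_erase S s(x, y) hd]
            rw [SimpleGraph.connected_iff]
            refine ⟨fun a b => ?_, hconn.nonempty⟩
            obtain ⟨w⟩ := hconn.preconnected a b
            exact reachable_delete_of_walk hre w
          exact hdel s(x, y) heS hcon'
      have htree : (SimpleGraph.fromEdgeSet (S : Set (Sym2 V))).IsTree := ⟨hconn, hacyc⟩
      have hfin : Fintype ↑((SimpleGraph.fromEdgeSet (S : Set (Sym2 V))).edgeSet) :=
        (Set.toFinite _).fintype
      have hedge : (SimpleGraph.fromEdgeSet (S : Set (Sym2 V))).edgeFinset = S := by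
        ext e
        rw [SimpleGraph.mem_edgeFinset, SimpleGraph.edgeSet_fromEdgeSet]
        constructor
        · rintro ⟨h1, -⟩; exact h1
        · intro h; exact ⟨h, hnodiag e h⟩
      have hcard := htree.card_edgeFinset
      rw [hedge] at hcard
      exact ⟨S, Finset.Subset.refl S, hS, hconn, hcard⟩
end Aux3
section Aux4
set_option linter.unusedSectionVars false
set_option linter.unusedVariables false
open scoped Classical
open Finset

variable {V : Type*} [Fintype V] [DecidableEq V]

lemma setCost_nonneg {c : Sym2 V → ℝ} (hc : ∀ e, 0 ≤ c e) (J : Finset (Sym2 V)) :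
    0 ≤ setCost c J :=
  Finset.sum_nonneg fun e _ => hc e

lemma setCost_mono {c : Sym2 V → ℝ} (hc : ∀ e, 0 ≤ c e) {A B : Finset (Sym2 V)}
    (h : A ⊆ B) : setCost c A ≤ setCost c B :=
  Finset.sum_le_sum_of_subset_of_nonneg h fun i _ _ => hc i

lemma setCost_eq_sum_ite {c : Sym2 V → ℝ} {X E : Finset (Sym2 V)} (hX : X ⊆ E) :
    setCost c X = ∑ e ∈ E, if e ∈ X then c e else 0 := by
  rw [Finset.sum_ite_mem, Finset.inter_eq_right.2 hX, setCost]

lemma odd_card_filter_odd {α : Type*} [DecidableEq α] (s : Finset α) (g : α → ℕ) :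
    Odd ((s.filter (fun a => Odd (g a))).card) ↔ Odd (∑ a ∈ s, g a) := by
  induction s using Finset.induction_on with
  | empty => simp
  | @insert a s ha ih =>
      rw [Finset.filter_insert, Finset.sum_insert ha]
      have hns : a ∉ s.filter (fun a => Odd (g a)) := fun hc => ha (Finset.mem_filter.1 hc).1
      by_cases hodd : Odd (g a)
      · rw [if_pos hodd, Finset.card_insert_of_notMem hns]
        rw [Nat.odd_iff] at hodd
        simp only [Nat.odd_iff] at ih ⊢
        omega
      · rw [if_neg hodd]
        rw [Nat.not_odd_iff] at hodd
        simp only [Nat.odd_iff] at ih ⊢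
        omega

lemma setCost_support_le_tourCost (G : SimpleGraph V) (c : Sym2 V → ℝ) (hc : ∀ e, 0 ≤ c e)
    (m : Sym2 V → ℕ) :
    setCost c ((edgesOf G).filter (fun e => 0 < m e)) ≤ tourCost G c m := by
  unfold setCost tourCost
  calc ∑ e ∈ (edgesOf G).filter (fun e => 0 < m e), c e
      ≤ ∑ e ∈ (edgesOf G).filter (fun e => 0 < m e), (m e : ℝ) * c e := by
        apply Finset.sum_le_sum
        intro e he
        have h1 : 0 < m e := (Finset.mem_filter.1 he).2
        have h2 : (1 : ℝ) ≤ (m e : ℝ) := by exact_mod_cast h1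
        nlinarith [hc e]
    _ ≤ ∑ e ∈ edgesOf G, (m e : ℝ) * c e := by
        apply Finset.sum_le_sum_of_subset_of_nonneg (Finset.filter_subset _ _)
        intro e _ _
        exact mul_nonneg (by positivity) (hc e)
end Aux4
section Aux5
set_option linter.unusedSectionVars false
set_option linter.unusedVariables false
set_option maxHeartbeats 1000000
open scoped Classical
open Finset

variable {V : Type*} [Fintype V] [DecidableEq V]

lemma symDiff_self_eq (A : Finset V) : symDiff A A = ∅ := by
  ext x; rw [mem_symDiff]; simp

lemma symDiff_empty_right (A : Finset V) : symDiff A ∅ = A := by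
  ext x; rw [mem_symDiff]; simp

lemma symDiff_subset_union (A B : Finset V) : symDiff A B ⊆ A ∪ B := by
  intro x hx
  rcases Finset.mem_union.1 hx with h | h
  · exact Finset.mem_union_left _ (Finset.mem_sdiff.1 h).1
  · exact Finset.mem_union_right _ (Finset.mem_sdiff.1 h).1

lemma key_lemma (G : SimpleGraph V) (T : Finset V) (hT : Even T.card)
    (c : Sym2 V → ℝ) (hc : ∀ e, 0 ≤ c e) (F : Finset (Sym2 V)) (hF : IsSpanningTree G F)
    (hFmin : ∀ F' : Finset (Sym2 V), IsSpanningTree G F' → setCost c F ≤ setCost c F')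
    (m : Sym2 V → ℕ) (htour : IsTTour G T m) :
    ∃ J, IsTJoin G (symDiff (oddVerts F) T) J ∧
      3 * setCost c J ≤ 2 * tourCost G c m := by
  obtain ⟨hFsub, hFconn, hFcard⟩ := hF
  obtain ⟨hm1, hm2, hm3, hm4⟩ := htour
  set E := edgesOf G with hE
  set S := E.filter (fun e => 0 < m e) with hSdef
  have hSsub : S ⊆ E := Finset.filter_subset _ _
  have hScoe : (S : Set (Sym2 V)) = {e | 0 < m e} := by
    ext e
    simp only [hSdef, Finset.coe_filter, Set.mem_setOf_eq, hE]
    exact ⟨fun h => h.2, fun h => ⟨mem_edgesOf.2 (hm1 e h), h⟩⟩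
  have hSconn : (SimpleGraph.fromEdgeSet (S : Set (Sym2 V))).Connected := by
    rw [hScoe]; exact hm3
  obtain ⟨F'', hF''S, hF''tree⟩ := exists_spanning_tree_subset G S hSsub hSconn
  have hcF : setCost c F ≤ tourCost G c m :=
    (hFmin F'' hF''tree).trans ((setCost_mono hc hF''S).trans
      (setCost_support_le_tourCost G c hc m))
  set TF := oddVerts F with hTF
  set T' := symDiff TF T with hT'
  have hTFeven : Even TF.card := even_card_oddVerts (fun e he =>
    SimpleGraph.not_isDiag_of_mem_edgeSet G (mem_edgesOf.1 (hFsub he)))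
  have hT'even : Even T'.card := even_card_symDiff hTFeven hT
  obtain ⟨X1, hX1F, hX1odd⟩ := exists_join_of_connected F hFconn T' hT'even
  obtain ⟨X2, hX2F, hX2odd⟩ := exists_join_of_connected F'' hF''tree.2.1 T' hT'even
  have hX1E : X1 ⊆ E := hX1F.trans hFsub
  have hX2E : X2 ⊆ E := (hX2F.trans hF''S).trans hSsub
  set A' := E.filter (fun e => Odd (m e + (if e ∈ F then 1 else 0))) with hA'def
  have hA'sub : A' ⊆ E := Finset.filter_subset _ _
  have hA'odd : oddVerts A' = T' := by
    ext v
    rw [mem_oddVerts]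
    have hdeg : degOn A' v
        = ((E.filter (fun e => v ∈ e)).filter
            (fun e => Odd (m e + (if e ∈ F then 1 else 0)))).card := by
      unfold degOn
      rw [hA'def, Finset.filter_filter, Finset.filter_filter]
      congr 1
      ext e
      simp only [Finset.mem_filter]
      tauto
    rw [hdeg, odd_card_filter_odd]
    have hsplit : ∑ e ∈ E.filter (fun e => v ∈ e), (m e + (if e ∈ F then 1 else 0))
        = (∑ e ∈ E, if v ∈ e then m e else 0) + degOn F v := by
      rw [Finset.sum_add_distrib]
      congr 1
      · rw [Finset.sum_filter]
      · unfold degOn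
        rw [Finset.card_filter, Finset.sum_filter]
        have hFE : ∑ e ∈ F, (if v ∈ e then 1 else 0)
            = ∑ e ∈ E, (if e ∈ F then (if v ∈ e then 1 else 0) else 0) := by
          rw [Finset.sum_ite_mem, Finset.inter_eq_right.2 hFsub]
        rw [hFE]
        apply Finset.sum_congr rfl
        intro e he
        by_cases h1 : v ∈ e <;> by_cases h2 : e ∈ F <;> simp [h1, h2]
    rw [hsplit]
    have hmT := hm4 v
    rw [hT', mem_symDiff, ← hmT, hTF, mem_oddVerts]
    simp only [Nat.odd_iff]
    omega
  set X12 := symDiff X1 X2 with hX12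
  set J3 := symDiff A' X12 with hJ3
  have hX12sub : X12 ⊆ E := (symDiff_subset_union X1 X2).trans
    (Finset.union_subset hX1E hX2E)
  have hJ3sub : J3 ⊆ E := (symDiff_subset_union A' X12).trans
    (Finset.union_subset hA'sub hX12sub)
  have hJ3odd : oddVerts J3 = T' := by
    rw [hJ3, oddVerts_symDiff, hA'odd, hX12, oddVerts_symDiff, hX1odd, hX2odd,
      symDiff_self_eq, symDiff_empty_right]
  have hkey : setCost c X1 + setCost c X2 + setCost c J3
      ≤ tourCost G c m + setCost c F := by
    rw [setCost_eq_sum_ite hX1E, setCost_eq_sum_ite hX2E, setCost_eq_sum_ite hJ3sub,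
      setCost_eq_sum_ite hFsub]
    unfold tourCost
    rw [← Finset.sum_add_distrib, ← Finset.sum_add_distrib, ← Finset.sum_add_distrib]
    apply Finset.sum_le_sum
    intro e he
    have hA'mem : e ∈ A' ↔ Odd (m e + (if e ∈ F then 1 else 0)) := by
      rw [hA'def, Finset.mem_filter]
      simp [he]
    have hJ3mem : e ∈ J3 ↔
        (Odd (m e + (if e ∈ F then 1 else 0)) ↔ ¬ ((e ∈ X1) ↔ ¬ (e ∈ X2))) := by
      rw [hJ3, mem_symDiff, hA'mem, hX12, mem_symDiff]
    have hmF : e ∈ X1 → e ∈ F := fun hx => hX1F hx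
    have hmS : e ∈ X2 → 0 < m e := fun hx => (Finset.mem_filter.1 (hF''S (hX2F hx))).2
    have hnat : (if e ∈ X1 then 1 else 0) + (if e ∈ X2 then 1 else 0)
        + (if e ∈ J3 then 1 else 0) ≤ m e + (if e ∈ F then 1 else 0) := by
      by_cases hf : e ∈ F
      · simp only [hf, if_true, if_false] at hJ3mem ⊢
        by_cases hx1 : e ∈ X1 <;> by_cases hx2 : e ∈ X2 <;>
          by_cases hodd : Odd (m e + 1)
        · have hm : 0 < m e := hmS hx2
          have hnQ : ¬ ((e ∈ X1) ↔ ¬ (e ∈ X2)) := fun q => (q.1 hx1) hx2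
          have hj : e ∈ J3 := hJ3mem.2 (iff_of_true hodd hnQ)
          rw [Nat.odd_iff] at hodd
          simp only [hx1, hx2, hj, if_true]
          omega
        · have hm : 0 < m e := hmS hx2
          have hnQ : ¬ ((e ∈ X1) ↔ ¬ (e ∈ X2)) := fun q => (q.1 hx1) hx2
          have hj : e ∉ J3 := fun hj => hodd ((hJ3mem.1 hj).2 hnQ)
          simp only [hx1, hx2, hj, if_true, if_false]
          omega
        · have hQ : (e ∈ X1) ↔ ¬ (e ∈ X2) := iff_of_true hx1 hx2
          have hj : e ∉ J3 := fun hj => ((hJ3mem.1 hj).1 hodd) hQ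
          simp only [hx1, hx2, hj, if_true, if_false]
          omega
        · have hQ : (e ∈ X1) ↔ ¬ (e ∈ X2) := iff_of_true hx1 hx2
          have hj : e ∈ J3 := hJ3mem.2 (iff_of_false hodd (not_not_intro hQ))
          rw [Nat.not_odd_iff] at hodd
          simp only [hx1, hx2, hj, if_true, if_false]
          omega
        · have hQ : (e ∈ X1) ↔ ¬ (e ∈ X2) := iff_of_false hx1 (not_not_intro hx2)
          have hj : e ∉ J3 := fun hj => ((hJ3mem.1 hj).1 hodd) hQ
          simp only [hx1, hx2, hj, if_true, if_false]
          omega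
        · have hm : 0 < m e := hmS hx2
          have hQ : (e ∈ X1) ↔ ¬ (e ∈ X2) := iff_of_false hx1 (not_not_intro hx2)
          have hj : e ∈ J3 := hJ3mem.2 (iff_of_false hodd (not_not_intro hQ))
          rw [Nat.not_odd_iff] at hodd
          simp only [hx1, hx2, hj, if_true, if_false]
          omega
        · have hnQ : ¬ ((e ∈ X1) ↔ ¬ (e ∈ X2)) := fun q => hx1 (q.2 hx2)
          have hj : e ∈ J3 := hJ3mem.2 (iff_of_true hodd hnQ)
          rw [Nat.odd_iff] at hodd
          simp only [hx1, hx2, hj, if_true, if_false]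
          omega
        · have hnQ : ¬ ((e ∈ X1) ↔ ¬ (e ∈ X2)) := fun q => hx1 (q.2 hx2)
          have hj : e ∉ J3 := fun hj => hodd ((hJ3mem.1 hj).2 hnQ)
          simp only [hx1, hx2, hj, if_true, if_false]
          omega
      · have hx1 : e ∉ X1 := fun h => hf (hmF h)
        simp only [hf, if_true, if_false, add_zero] at hJ3mem ⊢
        by_cases hx2 : e ∈ X2 <;> by_cases hodd : Odd (m e)
        · have hQ : (e ∈ X1) ↔ ¬ (e ∈ X2) := iff_of_false hx1 (not_not_intro hx2)
          have hj : e ∉ J3 := fun hj => ((hJ3mem.1 hj).1 hodd) hQ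
          have hm : 0 < m e := hmS hx2
          simp only [hx1, hx2, hj, if_true, if_false]
          omega
        · have hQ : (e ∈ X1) ↔ ¬ (e ∈ X2) := iff_of_false hx1 (not_not_intro hx2)
          have hj : e ∈ J3 := hJ3mem.2 (iff_of_false hodd (not_not_intro hQ))
          have hm : 0 < m e := hmS hx2
          rw [Nat.not_odd_iff] at hodd
          simp only [hx1, hx2, hj, if_true, if_false]
          omega
        · have hnQ : ¬ ((e ∈ X1) ↔ ¬ (e ∈ X2)) := fun q => hx1 (q.2 hx2)
          have hj : e ∈ J3 := hJ3mem.2 (iff_of_true hodd hnQ)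
          rw [Nat.odd_iff] at hodd
          simp only [hx1, hx2, hj, if_true, if_false]
          omega
        · have hnQ : ¬ ((e ∈ X1) ↔ ¬ (e ∈ X2)) := fun q => hx1 (q.2 hx2)
          have hj : e ∉ J3 := fun hj => hodd ((hJ3mem.1 hj).2 hnQ)
          simp only [hx1, hx2, hj, if_true, if_false]
          omega
    have hcast : ((if e ∈ X1 then (1 : ℝ) else 0) + (if e ∈ X2 then (1 : ℝ) else 0)
        + (if e ∈ J3 then (1 : ℝ) else 0))
        ≤ (m e : ℝ) + (if e ∈ F then (1 : ℝ) else 0) := by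
      by_cases hx1 : e ∈ X1 <;> by_cases hx2 : e ∈ X2 <;> by_cases hj : e ∈ J3 <;>
        by_cases hf : e ∈ F <;>
        simp only [hx1, hx2, hj, hf, if_true, if_false] at hnat ⊢ <;>
        exact_mod_cast hnat
    have hfinal := mul_le_mul_of_nonneg_right hcast (hc e)
    by_cases hx1 : e ∈ X1 <;> by_cases hx2 : e ∈ X2 <;> by_cases hj : e ∈ J3 <;>
      by_cases hf : e ∈ F <;>
      simp only [hx1, hx2, hj, hf, if_true, if_false] at hfinal ⊢ <;>
      nlinarith [hfinal, hc e]
  have hmin : ∃ J : Finset (Sym2 V), J ⊆ E ∧ oddVerts J = T' ∧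
      3 * setCost c J ≤ setCost c X1 + setCost c X2 + setCost c J3 := by
    rcases le_total (setCost c X1) (setCost c X2) with h12 | h12
    · rcases le_total (setCost c X1) (setCost c J3) with h13 | h13
      · exact ⟨X1, hX1E, hX1odd, by linarith⟩
      · exact ⟨J3, hJ3sub, hJ3odd, by linarith⟩
    · rcases le_total (setCost c X2) (setCost c J3) with h23 | h23
      · exact ⟨X2, hX2E, hX2odd, by linarith⟩
      · exact ⟨J3, hJ3sub, hJ3odd, by linarith⟩
  obtain ⟨J, hJE, hJodd, hJc⟩ := hmin
  exact ⟨J, ⟨hJE, hJodd⟩, by linarith⟩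
end Aux5
section Aux6
set_option linter.unusedSectionVars false
set_option linter.unusedVariables false
set_option maxHeartbeats 1000000
open scoped Classical
open Finset

variable {V : Type*} [Fintype V] [DecidableEq V]

lemma degOn_as_sum {X E : Finset (Sym2 V)} (hX : X ⊆ E) (v : V) :
    degOn X v = ∑ e ∈ E, if v ∈ e then (if e ∈ X then 1 else 0) else 0 := by
  unfold degOn
  rw [Finset.card_filter]
  have h1 : ∑ e ∈ X, (if v ∈ e then 1 else 0)
      = ∑ e ∈ E, (if e ∈ X then (if v ∈ e then 1 else 0) else 0) := by
    rw [Finset.sum_ite_mem, Finset.inter_eq_right.2 hX]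
  rw [h1]
  apply Finset.sum_congr rfl
  intro e he
  by_cases h2 : v ∈ e <;> by_cases h3 : e ∈ X <;> simp [h2, h3]

lemma exists_tour (G : SimpleGraph V) (T : Finset V) (hT : Even T.card)
    (F : Finset (Sym2 V)) (hF : IsSpanningTree G F) :
    ∃ m : Sym2 V → ℕ, IsTTour G T m := by
  obtain ⟨hFsub, hFconn, hFcard⟩ := hF
  have hTFeven : Even (oddVerts F).card := even_card_oddVerts (fun e he =>
    SimpleGraph.not_isDiag_of_mem_edgeSet G (mem_edgesOf.1 (hFsub he)))
  have hT'even : Even (symDiff (oddVerts F) T).card := even_card_symDiff hTFeven hT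
  obtain ⟨K, hKF, hKodd⟩ := exists_join_of_connected F hFconn _ hT'even
  refine ⟨fun e => (if e ∈ F then 1 else 0) + (if e ∈ K then 1 else 0), ?_, ?_, ?_, ?_⟩
  · intro e he
    by_cases heF : e ∈ F
    · exact mem_edgesOf.1 (hFsub heF)
    · have heK : e ∉ K := fun h => heF (hKF h)
      simp [heF, heK] at he
  · intro e
    by_cases heF : e ∈ F <;> by_cases heK : e ∈ K <;> simp [heF, heK]
  · have hsupp : {e : Sym2 V | 0 < (if e ∈ F then 1 else 0) + (if e ∈ K then 1 else 0)}
        = (F : Set (Sym2 V)) := by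
      ext e
      simp only [Set.mem_setOf_eq, Finset.mem_coe]
      constructor
      · intro h
        by_cases heF : e ∈ F
        · exact heF
        · have heK : e ∉ K := fun h' => heF (hKF h')
          simp [heF, heK] at h
      · intro h; simp [h]
    rw [hsupp]
    exact hFconn
  · intro v
    have hsplit : (∑ e ∈ edgesOf G, if v ∈ e then
          (if e ∈ F then 1 else 0) + (if e ∈ K then 1 else 0) else 0)
        = degOn F v + degOn K v := by
      rw [degOn_as_sum hFsub v, degOn_as_sum (hKF.trans hFsub) v,
        ← Finset.sum_add_distrib]
      apply Finset.sum_congr rfl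
      intro e he
      by_cases h2 : v ∈ e <;> simp [h2]
    rw [hsplit]
    have ha : Odd (degOn F v) ↔ v ∈ oddVerts F := mem_oddVerts.symm
    have hb : Odd (degOn K v) ↔ ((v ∈ oddVerts F) ↔ ¬ (v ∈ T)) := by
      rw [← mem_oddVerts, hKodd, mem_symDiff]
    have hpar : Odd (degOn F v + degOn K v)
        ↔ (Odd (degOn F v) ↔ ¬ Odd (degOn K v)) := by
      simp only [Nat.odd_iff]; omega
    rw [hpar, ha, hb]
    by_cases hvF : v ∈ oddVerts F <;> by_cases hvT : v ∈ T <;> simp [hvF, hvT]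
end Aux6
/-- for a minimum-length spanning tree `F`,
`τ(G, T_F △ T, c) ≤ (2/3) opt(G,T,c)`. -/
theorem stmt4 {V : Type*} [Fintype V] [DecidableEq V]
    (G : SimpleGraph V) (hG : G.Connected)
    (T : Finset V) (hT : Even T.card)
    (c : Sym2 V → ℝ) (hc : ∀ e, 0 ≤ c e)
    (F : Finset (Sym2 V)) (hF : IsSpanningTree G F)
    (hFmin : ∀ F' : Finset (Sym2 V), IsSpanningTree G F' → setCost c F ≤ setCost c F') :
    tau G (symDiff (oddVerts F) T) c ≤ (2 / 3) * optLen G T c := by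
  classical
  obtain ⟨m0, htour0⟩ := exists_tour G T hT F hF
  have htaueq : tau G (symDiff (oddVerts F) T) c
      = sInf {L : ℝ | ∃ J, IsTJoin G (symDiff (oddVerts F) T) J ∧ L = setCost c J} := rfl
  have hopteq : optLen G T c
      = sInf {L : ℝ | ∃ m, IsTTour G T m ∧ L = tourCost G c m} := rfl
  have hbdd : BddBelow {L : ℝ | ∃ J, IsTJoin G (symDiff (oddVerts F) T) J ∧ L = setCost c J} := by
    refine ⟨0, fun L hL => ?_⟩
    obtain ⟨J, hJ, rfl⟩ := hL
    exact setCost_nonneg hc J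
  have hne : ({L : ℝ | ∃ m, IsTTour G T m ∧ L = tourCost G c m}).Nonempty :=
    ⟨tourCost G c m0, m0, htour0, rfl⟩
  have hmain : ∀ L ∈ {L : ℝ | ∃ m, IsTTour G T m ∧ L = tourCost G c m},
      (3 / 2) * tau G (symDiff (oddVerts F) T) c ≤ L := by
    rintro L ⟨m, htm, rfl⟩
    obtain ⟨J, hJ, hJle⟩ := key_lemma G T hT c hc F hF hFmin m htm
    have htau_le : tau G (symDiff (oddVerts F) T) c ≤ setCost c J := by
      rw [htaueq]
      exact csInf_le hbdd ⟨J, hJ, rfl⟩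
    linarith
  have hfin : (3 / 2) * tau G (symDiff (oddVerts F) T) c ≤ optLen G T c := by
    rw [hopteq]
    exact le_csInf hne hmain
  linarith
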